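/- Isotonic calibration is fully empirically calibrated: Let T_1,…,T_n ∈ ℝ be the prediction scores T_i = m(X_i), and let f̂ be a minimizer of ∑_{i=1}^n (Y_i − f(T_i))² over all nondecreasing functions f : ℝ → ℝ; set m*_i := f̂(T_i). Then: (i) for every function h : ℝ → ℝ, ∑_{i=1}^n h(m*_i)·(Y_i − m*_i) = 0; (ii) for every nondecreasing function θ : ℝ → ℝ, ∑_{i=1}^n (Y_i − m*_i)² ≤ ∑_{i=1}^n (Y_i − θ(T_i))²; in particular, ∑_{i=1}^n (Y_i − m*_i)² ≤ ∑_{i=1}^n (Y_i − T_i)². -/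

import Mathlib

open Finset

lemma exists_monotone_ext {n : ℕ} (hn : 1 ≤ n) (T w : Fin n → ℝ)
    (hc : ∀ i j, T i ≤ T j → w i ≤ w j) :
    ∃ f : ℝ → ℝ, Monotone f ∧ ∀ i, f (T i) = w i := by
  have : NeZero n := ⟨by omega⟩
  have hne : (Finset.univ : Finset (Fin n)).Nonempty := Finset.univ_nonempty
  set wmin := Finset.univ.inf' hne w with hwmin
  have hminle : ∀ i, wmin ≤ w i := fun i => Finset.inf'_le _ (mem_univ i)
  refine ⟨fun t => Finset.univ.sup' hne (fun i => if T i ≤ t then w i else wmin), ?_, ?_⟩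
  · intro s t hst
    apply Finset.sup'_le
    intro i _
    refine le_trans ?_ (Finset.le_sup' (f := fun i => if T i ≤ t then w i else wmin) (mem_univ i))
    by_cases h : T i ≤ s
    · rw [if_pos h, if_pos (le_trans h hst)]
    · rw [if_neg h]
      split
      · exact hminle i
      · exact le_refl _
  · intro j
    apply le_antisymm
    · apply Finset.sup'_le
      intro i _
      by_cases h : T i ≤ T j
      · simpa [h] using hc i j h
      · simpa [h] using hminle j
    · have := Finset.le_sup' (f := fun i => if T i ≤ T j then w i else wmin) (mem_univ j)
      exact le_trans (le_of_eq (by simp)) this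

lemma quad_zero (L N δ : ℝ) (hδ : 0 < δ) (hN : 0 ≤ N)
    (key : ∀ ε : ℝ, |ε| ≤ δ → 2 * ε * L ≤ ε ^ 2 * N) : L = 0 := by
  rcases lt_trichotomy L 0 with hL | hL | hL
  · set ε := min δ ((-L) / (N + 1)) with hε
    have hε0 : 0 < ε := lt_min hδ (div_pos (by linarith) (by positivity))
    have h1 := key (-ε) (by rw [abs_neg, abs_of_pos hε0]; exact min_le_left _ _)
    have h2 : ε ≤ (-L) / (N + 1) := min_le_right _ _
    have h3 : ε * (N + 1) ≤ -L := by
      rw [← le_div_iff₀ (by positivity)]; exact h2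
    nlinarith [mul_pos hε0 hε0, mul_le_mul_of_nonneg_left h3 (le_of_lt hε0)]
  · exact hL
  · set ε := min δ (L / (N + 1)) with hε
    have hε0 : 0 < ε := lt_min hδ (div_pos (by linarith) (by positivity))
    have h1 := key ε (by rw [abs_of_pos hε0]; exact min_le_left _ _)
    have h2 : ε ≤ L / (N + 1) := min_le_right _ _
    have h3 : ε * (N + 1) ≤ L := by
      rw [← le_div_iff₀ (by positivity)]; exact h2
    nlinarith [mul_pos hε0 hε0, mul_le_mul_of_nonneg_left h3 (le_of_lt hε0)]

/-- Isotonic calibration is fully empirically calibrated: if `fhat` minimizes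
the empirical squared loss over all nondecreasing functions, then (i) the
residuals are orthogonal to every transformation of the fitted values, and
(ii) the fitted score has empirical squared error no larger than any monotone
transformation of the original score; in particular no larger than the
original score itself. -/
theorem isotonic_calibration_fully_calibrated
    {𝒳 : Type*} (n : ℕ) (hn : 1 ≤ n) (Y : Fin n → ℝ)
    (X : Fin n → 𝒳) (m : 𝒳 → ℝ)
    (fhat : ℝ → ℝ) (hmono : Monotone fhat)
    (hmin : ∀ f : ℝ → ℝ, Monotone f →
      ∑ i, (Y i - fhat (m (X i))) ^ 2 ≤ ∑ i, (Y i - f (m (X i))) ^ 2) :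
    (∀ h : ℝ → ℝ,
      ∑ i, h (fhat (m (X i))) * (Y i - fhat (m (X i))) = 0)
    ∧ (∀ θ : ℝ → ℝ, Monotone θ →
      ∑ i, (Y i - fhat (m (X i))) ^ 2 ≤ ∑ i, (Y i - θ (m (X i))) ^ 2)
    ∧ ∑ i, (Y i - fhat (m (X i))) ^ 2 ≤ ∑ i, (Y i - m (X i)) ^ 2 := by
  classical
  set T : Fin n → ℝ := fun i => m (X i) with hT
  set v : Fin n → ℝ := fun i => fhat (T i) with hv
  have hvmono : ∀ i j : Fin n, T i ≤ T j → v i ≤ v j := fun i j hij => hmono hij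
  -- Reformulated minimality over finite value assignments
  have hmin' : ∀ w : Fin n → ℝ, (∀ i j, T i ≤ T j → w i ≤ w j) →
      ∑ i, (Y i - v i) ^ 2 ≤ ∑ i, (Y i - w i) ^ 2 := by
    intro w hcomp
    obtain ⟨f, hf, hfw⟩ := exists_monotone_ext hn T w hcomp
    have := hmin f hf
    have hfw' : ∀ i, f (m (X i)) = w i := hfw
    simpa [hv, hT, hfw'] using this
  -- gap between distinct fitted values
  set P : Finset (Fin n × Fin n) :=
    (Finset.univ ×ˢ Finset.univ).filter (fun p => v p.1 < v p.2) with hP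
  set δ : ℝ := if hPne : P.Nonempty then P.inf' hPne (fun p => v p.2 - v p.1) else 1 with hδdef
  have hδ : 0 < δ := by
    rw [hδdef]
    split
    · rename_i hPne
      rw [Finset.lt_inf'_iff]
      intro p hp
      rw [hP, Finset.mem_filter] at hp
      linarith [hp.2]
    · norm_num
  have hδle : ∀ i j : Fin n, v i < v j → δ ≤ v j - v i := by
    intro i j hij
    have hmem : (i, j) ∈ P := by
      rw [hP, Finset.mem_filter]
      exact ⟨Finset.mem_product.2 ⟨mem_univ i, mem_univ j⟩, hij⟩
    rw [hδdef, dif_pos ⟨(i, j), hmem⟩]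
    exact Finset.inf'_le _ hmem
  -- each level-set residual sum vanishes
  have level : ∀ c : ℝ, (∑ i, (if v i = c then (1:ℝ) else 0) * (Y i - v i)) = 0 := by
    intro c
    set e : Fin n → ℝ := fun i => if v i = c then 1 else 0 with he
    set L : ℝ := ∑ i, e i * (Y i - v i) with hL
    set N : ℝ := ∑ i, e i ^ 2 with hN
    have hNnn : 0 ≤ N := Finset.sum_nonneg fun i _ => sq_nonneg _
    refine quad_zero L N δ hδ hNnn ?_
    intro ε hε
    have he01 : ∀ i, e i = 0 ∨ e i = 1 := by
      intro i; rw [he]; dsimp only; split <;> simp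
    have hcomp : ∀ i j, T i ≤ T j → v i + ε * e i ≤ v j + ε * e j := by
      intro i j hij
      rcases eq_or_lt_of_le (hvmono i j hij) with heq | hlt
      · have : e i = e j := by rw [he]; dsimp only; rw [heq]
        rw [this, heq]
      · have hgap := hδle i j hlt
        have hdiff : |e i - e j| ≤ 1 := by
          rcases he01 i with h1 | h1 <;> rcases he01 j with h2 | h2 <;>
            rw [h1, h2] <;> norm_num
        have : ε * e i - ε * e j ≤ |ε| := by
          calc ε * e i - ε * e j = ε * (e i - e j) := by ring
            _ ≤ |ε * (e i - e j)| := le_abs_self _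
            _ = |ε| * |e i - e j| := abs_mul _ _
            _ ≤ |ε| * 1 := by
                exact mul_le_mul_of_nonneg_left hdiff (abs_nonneg _)
            _ = |ε| := mul_one _
        linarith
    have hkey := hmin' (fun i => v i + ε * e i) hcomp
    have hexp : ∑ i, (Y i - (v i + ε * e i)) ^ 2
        = ∑ i, (Y i - v i) ^ 2 - 2 * ε * L + ε ^ 2 * N := by
      rw [hL, hN, Finset.mul_sum, Finset.mul_sum, ← Finset.sum_sub_distrib,
        ← Finset.sum_add_distrib]
      apply Finset.sum_congr rfl
      intro i _
      ring
    rw [hexp] at hkey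
    linarith
  refine ⟨?_, ?_, ?_⟩
  · intro h
    have hmaps : ∀ i ∈ (Finset.univ : Finset (Fin n)), v i ∈ Finset.univ.image v :=
      fun i _ => Finset.mem_image_of_mem v (mem_univ i)
    have hfib := Finset.sum_fiberwise_of_maps_to hmaps (fun i => h (v i) * (Y i - v i))
    have hgoal : ∑ i, h (v i) * (Y i - v i) = 0 := by
      rw [← hfib]
      apply Finset.sum_eq_zero
      intro c hc
      have hinner : ∑ i ∈ Finset.univ.filter (fun i => v i = c), h (v i) * (Y i - v i)
          = h c * ∑ i, (if v i = c then (1:ℝ) else 0) * (Y i - v i) := by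
        rw [Finset.mul_sum, Finset.sum_filter]
        apply Finset.sum_congr rfl
        intro i _
        by_cases hvi : v i = c
        · rw [if_pos hvi, if_pos hvi, hvi]; ring
        · rw [if_neg hvi, if_neg hvi]; ring
      rw [hinner, level c, mul_zero]
    exact hgoal
  · intro θ hθ
    exact hmin θ hθ
  · simpa using hmin id monotone_id
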